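/- Fix real numbers λ > 0 and a < 0 < b with b + λa < 0. Set ω := √(−ab/λ). Then: (i) for every k ∈ (−1,1), (k·b/λ + a)/((k−1)·ω) > 1, and hence there is a unique L_k > 0 with (k−1)·ω·cosh(ω·L_k) = (k·b/λ + a)·sinh(ω·L_k); (ii) the function k ↦ L_k is strictly decreasing on (−1,1); (iii) sup{L_k : k ∈ (−1,1)} = t*/ω, where t* > 0 is the unique positive real with cosh(t*)·2√(−λab) = (b − λa)·sinh(t*). -/

import Mathlib

open Real

private lemma eqn_iff' {c d x : ℝ} (h : c - d ≠ 0) :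
    d * Real.cosh x = c * Real.sinh x ↔ Real.exp (2*x) = (c+d)/(c-d) := by
  have he := Real.exp_pos x
  have key : Real.exp (2*x) * (c-d) - (c+d) =
      2*Real.exp x * (c * Real.sinh x - d * Real.cosh x) := by
    rw [Real.sinh_eq, Real.cosh_eq, show (2:ℝ)*x = x+x by ring, Real.exp_add, Real.exp_neg]
    field_simp
    ring
  rw [eq_div_iff h]
  constructor <;> intro H <;> nlinarith [key, he]

private lemma sol_iff {ω c d : ℝ} (hω : 0 < ω) (hne : c - d ≠ 0)
    (hR : 1 < (c+d)/(c-d)) (L : ℝ) :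
    (0 < L ∧ d * Real.cosh (ω*L) = c * Real.sinh (ω*L)) ↔
      L = Real.log ((c+d)/(c-d)) / (2*ω) := by
  rw [eqn_iff' hne]
  constructor
  · rintro ⟨hL, hE⟩
    have h1 : Real.log ((c+d)/(c-d)) = 2*(ω*L) := by rw [← hE, Real.log_exp]
    rw [h1]; field_simp
  · rintro rfl
    have hRpos : (0:ℝ) < (c+d)/(c-d) := by linarith
    have hlog : 0 < Real.log ((c+d)/(c-d)) := Real.log_pos hR
    constructor
    · positivity
    · rw [show 2*(ω * (Real.log ((c+d)/(c-d)) / (2*ω))) = Real.log ((c+d)/(c-d)) by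
        field_simp, Real.exp_log hRpos]

/-- For `λ > 0`, `a < 0 < b` with `b + λa < 0` and `ω = √(−ab/λ)`:
(i) for every `k ∈ (−1,1)`, `(kb/λ + a)/((k−1)ω) > 1` and there is a unique `L_k > 0` with
`(k−1)ω·cosh(ωL_k) = (kb/λ + a)·sinh(ωL_k)`; (ii) `k ↦ L_k` is strictly decreasing on
`(−1,1)`; (iii) `sup{L_k} = t*/ω`, where `t* > 0` is the unique positive real with
`cosh(t*)·2√(−λab) = (b − λa)·sinh(t*)`. -/
theorem stmt_16 (lam a b : ℝ) (hlam : 0 < lam) (ha : a < 0) (hb : 0 < b)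
    (hba : b + lam * a < 0) (ω : ℝ) (hω : ω = Real.sqrt (-(a * b) / lam))
    (Lk : ℝ → ℝ)
    (hLk : ∀ k ∈ Set.Ioo (-1 : ℝ) 1, 0 < Lk k ∧
      (k - 1) * ω * Real.cosh (ω * Lk k) = (k * b / lam + a) * Real.sinh (ω * Lk k)) :
    (∀ k ∈ Set.Ioo (-1 : ℝ) 1, 1 < (k * b / lam + a) / ((k - 1) * ω)) ∧
    (∀ k ∈ Set.Ioo (-1 : ℝ) 1, ∃! L : ℝ, 0 < L ∧
      (k - 1) * ω * Real.cosh (ω * L) = (k * b / lam + a) * Real.sinh (ω * L)) ∧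
    StrictAntiOn Lk (Set.Ioo (-1 : ℝ) 1) ∧
    (∃! t : ℝ, 0 < t ∧
      Real.cosh t * (2 * Real.sqrt (-(lam * a * b))) = (b - lam * a) * Real.sinh t) ∧
    (∀ t : ℝ, 0 < t →
      Real.cosh t * (2 * Real.sqrt (-(lam * a * b))) = (b - lam * a) * Real.sinh t →
      sSup (Lk '' Set.Ioo (-1 : ℝ) 1) = t / ω) := by
  -- basic setup
  have h1 : 0 < -(a*b)/lam := div_pos (by nlinarith) hlam
  have hωpos : 0 < ω := by rw [hω]; exact Real.sqrt_pos.mpr h1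
  have hω2 : ω^2 = (-a) * (b/lam) := by rw [hω, Real.sq_sqrt h1.le]; ring
  have hQ : 0 < b/lam := div_pos hb hlam
  have hQP : b/lam < -a := by rw [div_lt_iff₀ hlam]; nlinarith
  have hQω : b/lam < ω := by nlinarith [hω2, hQ, hQP, hωpos]
  have hAM : 2*ω < -a + b/lam := by nlinarith [hω2, hωpos, sq_nonneg (-a - b/lam)]
  -- c < d for k ≥ -1
  have hsub : ∀ k : ℝ, -1 ≤ k → (k*b/lam + a) - (k-1)*ω < 0 := by
    intro k hk
    have h2 : (0:ℝ) ≤ (k+1)*(ω - b/lam) :=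
      mul_nonneg (by linarith) (by linarith)
    have h3 : k*b/lam = k*(b/lam) := by ring
    nlinarith [h2, hAM, h3]
  have hdneg : ∀ k : ℝ, k < 1 → (k-1)*ω < 0 :=
    fun k hk => mul_neg_of_neg_of_pos (by linarith) hωpos
  have hratio : ∀ k : ℝ, -1 ≤ k → k < 1 →
      1 < ((k*b/lam + a) + (k-1)*ω) / ((k*b/lam + a) - (k-1)*ω) := by
    intro k hk1 hk2
    rw [lt_div_iff_of_neg (hsub k hk1)]
    have := hdneg k hk2
    linarith
  have hne : ∀ k : ℝ, -1 ≤ k → (k*b/lam + a) - (k-1)*ω ≠ 0 := fun k hk => (hsub k hk).ne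
  -- the value of Lk
  have hLkval : ∀ k ∈ Set.Ioo (-1:ℝ) 1, Lk k =
      Real.log (((k*b/lam + a) + (k-1)*ω) / ((k*b/lam + a) - (k-1)*ω)) / (2*ω) := by
    intro k hk
    exact (sol_iff hωpos (hne k hk.1.le) (hratio k hk.1.le hk.2) (Lk k)).mp (hLk k hk)
  -- R strictly decreasing on [-1,1)
  have hmono : ∀ k1 k2 : ℝ, -1 ≤ k1 → k1 < k2 → k2 < 1 →
      ((k2*b/lam + a) + (k2-1)*ω) / ((k2*b/lam + a) - (k2-1)*ω) <
      ((k1*b/lam + a) + (k1-1)*ω) / ((k1*b/lam + a) - (k1-1)*ω) := by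
    intro k1 k2 h1' h12 h2'
    have hm1 := hsub k1 h1'
    have hm2 := hsub k2 (by linarith)
    have key : ((k1*b/lam + a) + (k1-1)*ω) / ((k1*b/lam + a) - (k1-1)*ω) -
        ((k2*b/lam + a) + (k2-1)*ω) / ((k2*b/lam + a) - (k2-1)*ω) =
        (2*ω*(k2-k1)*((-a) - b/lam)) /
          (((k1*b/lam + a) - (k1-1)*ω) * ((k2*b/lam + a) - (k2-1)*ω)) := by
      rw [div_sub_div _ _ hm1.ne hm2.ne, div_eq_div_iff (mul_ne_zero hm1.ne hm2.ne)
        (mul_ne_zero hm1.ne hm2.ne)]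
      ring
    have hpos : 0 < (2*ω*(k2-k1)*((-a) - b/lam)) /
        (((k1*b/lam + a) - (k1-1)*ω) * ((k2*b/lam + a) - (k2-1)*ω)) := by
      exact div_pos (mul_pos (mul_pos (by linarith) (by linarith)) (by linarith))
        (mul_pos_of_neg_of_neg hm1 hm2)
    linarith
  -- sqrt computation
  have hsqrt : Real.sqrt (-(lam*a*b)) = lam*ω := by
    rw [show -(lam*a*b) = (lam*ω)^2 by rw [mul_pow, hω2]; field_simp,
      Real.sqrt_sq (by positivity)]
  -- t* data
  have hcd' : 0 < (b - lam*a) - 2*(lam*ω) := by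
    have h3 : lam*(b/lam) = b := by field_simp
    nlinarith [mul_lt_mul_of_pos_left hAM hlam, h3]
  have hne' : (b - lam*a) - 2*(lam*ω) ≠ 0 := hcd'.ne'
  have hR' : 1 < ((b - lam*a) + 2*(lam*ω)) / ((b - lam*a) - 2*(lam*ω)) := by
    rw [lt_div_iff₀ hcd']
    nlinarith [mul_pos hlam hωpos]
  have hiff : ∀ t : ℝ, (0 < t ∧
      Real.cosh t * (2 * Real.sqrt (-(lam * a * b))) = (b - lam * a) * Real.sinh t) ↔
      t = Real.log (((b - lam*a) + 2*(lam*ω)) / ((b - lam*a) - 2*(lam*ω))) / 2 := by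
    intro t
    have base := sol_iff (ω := 1) (c := b - lam*a) (d := 2*(lam*ω)) one_pos hne' hR' t
    simp only [one_mul, mul_one] at base
    rw [← base, hsqrt]
    constructor
    · rintro ⟨h1', h2'⟩; exact ⟨h1', by linarith⟩
    · rintro ⟨h1', h2'⟩; exact ⟨h1', by linarith⟩
  -- R(-1) agrees with R'
  have hm1' : ((-1:ℝ)*b/lam + a) - ((-1:ℝ)-1)*ω < 0 := hsub (-1) le_rfl
  have hRagree : (((-1:ℝ)*b/lam + a) + ((-1:ℝ)-1)*ω) / (((-1:ℝ)*b/lam + a) - ((-1:ℝ)-1)*ω)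
      = ((b - lam*a) + 2*(lam*ω)) / ((b - lam*a) - 2*(lam*ω)) := by
    rw [div_eq_div_iff hm1'.ne hne']
    field_simp
    ring
  refine ⟨?_, ?_, ?_, ?_, ?_⟩
  · -- part (i) ratio
    rintro k ⟨hk1, hk2⟩
    rw [lt_div_iff_of_neg (hdneg k hk2)]
    have := hsub k hk1.le
    linarith
  · -- part (i) existence/uniqueness
    rintro k ⟨hk1, hk2⟩
    exact ⟨Real.log (((k*b/lam + a) + (k-1)*ω) / ((k*b/lam + a) - (k-1)*ω)) / (2*ω),
      (sol_iff hωpos (hne k hk1.le) (hratio k hk1.le hk2) _).mpr rfl,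
      fun y hy => (sol_iff hωpos (hne k hk1.le) (hratio k hk1.le hk2) y).mp hy⟩
  · -- part (ii)
    rintro k1 ⟨h1a, h1b⟩ k2 ⟨h2a, h2b⟩ h12
    rw [hLkval k1 ⟨h1a, h1b⟩, hLkval k2 ⟨h2a, h2b⟩]
    have hlt := hmono k1 k2 h1a.le h12 h2b
    have hp2 : (0:ℝ) < ((k2*b/lam + a) + (k2-1)*ω) / ((k2*b/lam + a) - (k2-1)*ω) := by
      linarith [hratio k2 h2a.le h2b]
    have := Real.log_lt_log hp2 hlt
    exact (div_lt_div_iff_of_pos_right (by positivity)).mpr this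
  · -- part (iii) existence/uniqueness of t*
    exact ⟨_, (hiff _).mpr rfl, fun y hy => (hiff y).mp hy⟩
  · -- sup
    intro t ht hteq
    have htval := (hiff t).mp ⟨ht, hteq⟩
    have htdiv : t / ω =
        Real.log ((((-1:ℝ)*b/lam + a) + ((-1:ℝ)-1)*ω) / (((-1:ℝ)*b/lam + a) - ((-1:ℝ)-1)*ω))
          / (2*ω) := by
      rw [htval, hRagree]; ring
    rw [htdiv]
    apply csSup_eq_of_forall_le_of_forall_lt_exists_gt
    · exact ⟨Lk 0, 0, by norm_num, rfl⟩
    · rintro x ⟨k, hk, rfl⟩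
      rw [hLkval k hk]
      have hlt := hmono (-1) k (le_refl _) hk.1 hk.2
      have hp2 : (0:ℝ) < ((k*b/lam + a) + (k-1)*ω) / ((k*b/lam + a) - (k-1)*ω) := by
        linarith [hratio k hk.1.le hk.2]
      have := Real.log_lt_log hp2 hlt
      apply le_of_lt
      exact (div_lt_div_iff_of_pos_right (by positivity)).mpr this
    · intro w hw
      set G : ℝ → ℝ := fun k =>
        Real.log ((k*b/lam + a + (k-1)*ω) / (k*b/lam + a - (k-1)*ω)) / (2*ω) with hG
      have hcont : ContinuousAt G (-1) := by
        apply ContinuousAt.div_const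
        apply ContinuousAt.log
        · exact ContinuousAt.div (by fun_prop) (by fun_prop) hm1'.ne
        · have := hratio (-1) le_rfl (by norm_num)
          exact ne_of_gt (by linarith)
      have htends : Filter.Tendsto G (nhdsWithin (-1) (Set.Ioi (-1))) (nhds (G (-1))) :=
        (hcont.tendsto).mono_left nhdsWithin_le_nhds
      have hw' : w < G (-1) := hw
      have hev : ∀ᶠ k in nhdsWithin (-1) (Set.Ioi (-1)), w < G k :=
        htends.eventually (eventually_gt_nhds hw')
      have hmem : Set.Ioo (-1:ℝ) 1 ∈ nhdsWithin (-1:ℝ) (Set.Ioi (-1)) :=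
        Ioo_mem_nhdsGT_of_mem ⟨le_rfl, by norm_num⟩
      obtain ⟨k, hk1, hk2⟩ :=
        (hev.and (Filter.eventually_of_mem hmem fun x hx => hx)).exists
      exact ⟨Lk k, ⟨k, hk2, rfl⟩, by rw [hLkval k hk2]; exact hk1⟩
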